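/- Rao-Blackwellization of the stochastic sum-and-sample estimator yields the unordered set estimator: E_{B^k ~ p(B^k|S^k)}[ ∑_{j=1}^{k-1} p(b_j) f(b_j) + (1 - ∑_{j=1}^{k-1} p(b_j)) f(b_k) ] = ∑_{s∈S^k} p(s) R(S^k,s) f(s). -/

import Mathlib

open Finset MeasureTheory

variable {α : Type*}

/-- Probability of drawing the ordered sample `B` sequentially without replacement
from (unnormalized) weights `p`, when `t` is the total remaining probability mass. -/
noncomputable def ordProb (p : α → ℝ) : ℝ → List α → ℝ
  | _, [] => 1
  | t, b :: L => (p b / t) * ordProb p (t - p b) L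

/-- Probability of drawing the unordered sample `S` without replacement:
sum of `ordProb` over all orderings of `S`. -/
noncomputable def setProb (p : α → ℝ) (t : ℝ) (S : Finset α) : ℝ :=
  (S.toList.permutations.map (ordProb p t)).sum

section Aux

variable [DecidableEq α] [Inhabited α]

/-- The finset of all orderings of `S`. -/
noncomputable def Perms (S : Finset α) : Finset (List α) := S.toList.permutations.toFinset

lemma mem_Perms {S : Finset α} {B : List α} : B ∈ Perms S ↔ B.Perm S.toList := by
  simp [Perms, List.mem_permutations]

lemma Perms_ne_nil {S : Finset α} (hS : S.Nonempty) {B : List α} (hB : B ∈ Perms S) :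
    B ≠ [] := by
  intro h0
  have := (mem_Perms.mp hB).length_eq
  rw [h0] at this
  simp only [List.length_nil, Finset.length_toList] at this
  exact hS.card_ne_zero this.symm

lemma sum_Perms_eq (h : List α → ℝ) (S : Finset α) :
    ∑ B ∈ Perms S, h B = (S.toList.permutations.map h).sum := by
  rw [Perms, List.sum_toFinset _ (List.nodup_permutations _ S.nodup_toList)]

lemma setProb_eq (p : α → ℝ) (t : ℝ) (S : Finset α) :
    setProb p t S = ∑ B ∈ Perms S, ordProb p t B :=
  (sum_Perms_eq _ _).symm

lemma toList_erase_perm (S : Finset α) (a : α) :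
    (S.toList.erase a).Perm (S.erase a).toList := by
  rw [← Multiset.coe_eq_coe]
  simp only [Finset.coe_toList, Finset.erase_val, ← Multiset.coe_erase, Finset.coe_toList]

lemma sum_Perms_cons (h : List α → ℝ) {S : Finset α} (hS : S.Nonempty) :
    ∑ B ∈ Perms S, h B = ∑ a ∈ S, ∑ L ∈ Perms (S.erase a), h (a :: L) := by
  rw [Finset.sum_sigma']
  refine (Finset.sum_nbij' (fun x => x.2.cons x.1)
    (fun B => ⟨B.headI, B.tail⟩) ?_ ?_ ?_ ?_ ?_).symm
  · rintro ⟨a, L⟩ hx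
    simp only [Finset.mem_sigma] at hx
    rw [mem_Perms]
    refine ((mem_Perms.mp hx.2).cons a).trans ?_
    have h' := Finset.toList_insert (Finset.notMem_erase a S)
    rw [Finset.insert_erase hx.1] at h'
    exact h'.symm
  · intro B hB
    have hperm := mem_Perms.mp hB
    obtain ⟨b, L, rfl⟩ := List.exists_cons_of_ne_nil (Perms_ne_nil hS hB)
    simp only [List.headI, List.tail, Finset.mem_sigma]
    have hb : b ∈ S := by
      have := hperm.mem_iff.mp List.mem_cons_self
      rwa [Finset.mem_toList] at this
    refine ⟨hb, ?_⟩
    rw [mem_Perms]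
    exact (List.cons_perm_iff_perm_erase.mp hperm).2.trans (toList_erase_perm S b)
  · rintro ⟨a, L⟩ hx
    rfl
  · intro B hB
    obtain ⟨b, L, rfl⟩ := List.exists_cons_of_ne_nil (Perms_ne_nil hS hB)
    rfl
  · rintro ⟨a, L⟩ hx
    rfl

lemma ordProb_cons (p : α → ℝ) (t : ℝ) (b : α) (L : List α) :
    ordProb p t (b :: L) = (p b / t) * ordProb p (t - p b) L := rfl

lemma setProb_empty (p : α → ℝ) (t : ℝ) : setProb p t (∅ : Finset α) = 1 := by
  simp [setProb, ordProb]

lemma setProb_rec (p : α → ℝ) {S : Finset α} (hS : S.Nonempty) (t : ℝ) :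
    setProb p t S = ∑ a ∈ S, (p a / t) * setProb p (t - p a) (S.erase a) := by
  rw [setProb_eq, sum_Perms_cons _ hS]
  refine Finset.sum_congr rfl fun a _ => ?_
  rw [setProb_eq, Finset.mul_sum]
  exact Finset.sum_congr rfl fun L _ => rfl

lemma setProb_singleton (p : α → ℝ) (t : ℝ) (a : α) :
    setProb p t {a} = p a / t := by
  rw [setProb_rec p (Finset.singleton_nonempty a) t]
  simp [setProb_empty]

lemma sum_toList_map (h : α → ℝ) (S : Finset α) :
    (S.toList.map h).sum = ∑ s ∈ S, h s := by
  rw [Finset.sum, ← Finset.coe_toList S, Multiset.map_coe, Multiset.sum_coe]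

lemma map_sum_of_perm (h : α → ℝ) {S : Finset α} {B : List α} (hB : B ∈ Perms S) :
    (B.map h).sum = ∑ s ∈ S, h s := by
  rw [← sum_toList_map h S]
  exact ((mem_Perms.mp hB).map h).sum_eq

/-- Sum over orderings weighting `f` at the last element. -/
lemma sum_Perms_last (p f : α → ℝ) (S : Finset α) :
    ∀ (t : ℝ), S.Nonempty →
    ∑ B ∈ Perms S, ordProb p t B * f B.reverse.headI
      = ∑ s ∈ S, (p s / (t - (∑ a ∈ S, p a) + p s)) * setProb p t (S.erase s) * f s := by
  induction S using Finset.strongInduction with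
  | _ S ih =>
    intro t hS
    obtain ⟨a0, ha0⟩ := hS
    have hS : S.Nonempty := ⟨a0, ha0⟩
    rcases Finset.eq_singleton_or_nontrivial ha0 with hsing | hnt
    · subst hsing
      rw [sum_Perms_cons _ (Finset.singleton_nonempty _)]
      simp [Perms, setProb_empty, ordProb, sub_add_cancel]
    · have h2 : ∀ a ∈ S, (S.erase a).Nonempty := fun a _ =>
        hnt.erase_nonempty
      have hswap : ∀ x y : α, x ∈ S ∧ y ∈ S.erase x ↔ x ∈ S.erase y ∧ y ∈ S := by
        intro x y
        simp only [Finset.mem_erase]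
        tauto
      calc ∑ B ∈ Perms S, ordProb p t B * f B.reverse.headI
          = ∑ a ∈ S, ∑ s ∈ S.erase a, (p a / t) *
              ((p s / (t - (∑ b ∈ S, p b) + p s))
                * setProb p (t - p a) ((S.erase s).erase a) * f s) := by
            rw [sum_Perms_cons _ hS]
            refine Finset.sum_congr rfl fun a ha => ?_
            have inner : ∑ L ∈ Perms (S.erase a),
                ordProb p t (a :: L) * f (a :: L).reverse.headI
                = (p a / t) * ∑ B ∈ Perms (S.erase a),
                    ordProb p (t - p a) B * f B.reverse.headI := by
              rw [Finset.mul_sum]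
              refine Finset.sum_congr rfl fun L hL => ?_
              have hLne := Perms_ne_nil (h2 a ha) hL
              have hrev : (a :: L).reverse.headI = L.reverse.headI := by
                rw [List.reverse_cons]
                obtain ⟨c, M, hM⟩ := List.exists_cons_of_ne_nil
                  (by simpa using hLne : L.reverse ≠ [])
                rw [hM]
                rfl
              rw [hrev, ordProb_cons]
              ring
            rw [inner, ih (S.erase a) (Finset.erase_ssubset ha) (t - p a) (h2 a ha),
              Finset.mul_sum]
            refine Finset.sum_congr rfl fun s hs => ?_
            rw [Finset.sum_erase_eq_sub ha, Finset.erase_right_comm]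
            have hden : t - p a - ((∑ b ∈ S, p b) - p a) + p s
                = t - (∑ b ∈ S, p b) + p s := by ring
            rw [hden]
        _ = ∑ s ∈ S, ∑ a ∈ S.erase s, (p a / t) *
              ((p s / (t - (∑ b ∈ S, p b) + p s))
                * setProb p (t - p a) ((S.erase s).erase a) * f s) :=
            Finset.sum_comm' hswap
        _ = ∑ s ∈ S, (p s / (t - (∑ a ∈ S, p a) + p s)) * setProb p t (S.erase s) * f s := by
            refine Finset.sum_congr rfl fun s hs => ?_
            rw [setProb_rec p (h2 s hs) t, Finset.mul_sum, Finset.sum_mul]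
            exact Finset.sum_congr rfl fun a ha => by ring

/-- The key identity relating `setProb` at reduced mass to `setProb` of a larger set. -/
lemma setProb_insert_identity (p : α → ℝ) (T : Finset α) :
    ∀ (s : α) (t : ℝ), s ∉ T → 0 < p s → (∀ a ∈ T, 0 < p a) →
    p s + ∑ a ∈ T, p a ≤ t →
    setProb p (t - p s) T
      = setProb p t (insert s T)
        + ((t - p s - ∑ a ∈ T, p a) / (t - ∑ a ∈ T, p a)) * setProb p t T := by
  induction T using Finset.strongInduction with
  | _ T ih =>
    intro s t hsT hps hpT hle
    rcases T.eq_empty_or_nonempty with rfl | hT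
    · simp only [Finset.sum_empty, sub_zero, setProb_empty, insert_empty_eq,
        setProb_singleton, mul_one]
      have ht : t ≠ 0 := by
        simp only [Finset.sum_empty, add_zero] at hle
        exact ne_of_gt (lt_of_lt_of_le hps hle)
      field_simp
      ring
    · have hpTpos : 0 < ∑ a ∈ T, p a := Finset.sum_pos hpT hT
      have hts : t - p s ≠ 0 := by
        have : 0 < t - p s := by linarith
        exact ne_of_gt this
      have ht : t ≠ 0 := by
        have : 0 < t := by linarith
        exact ne_of_gt this
      set k : ℝ := (t - p s - ∑ a ∈ T, p a) / (t - ∑ a ∈ T, p a) with hk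
      set A : α → ℝ := fun a => setProb p (t - p a) (insert s (T.erase a)) with hA
      set C : α → ℝ := fun a => setProb p (t - p a) (T.erase a) with hC
      have key : ∀ a ∈ T, setProb p (t - p s - p a) (T.erase a) = A a + k * C a := by
        intro a ha
        have hsub : ∑ b ∈ T.erase a, p b = (∑ b ∈ T, p b) - p a :=
          Finset.sum_erase_eq_sub ha
        have h := ih (T.erase a) (Finset.erase_ssubset ha) s (t - p a)
          (fun h' => hsT (Finset.mem_of_mem_erase h')) hps
          (fun b hb => hpT b (Finset.mem_of_mem_erase hb))
          (by rw [hsub]; linarith [hpT a ha])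
        rw [hsub] at h
        have e1 : t - p a - p s = t - p s - p a := by ring
        have e2 : t - p a - p s - ((∑ b ∈ T, p b) - p a) = t - p s - ∑ b ∈ T, p b := by
          ring
        have e3 : t - p a - ((∑ b ∈ T, p b) - p a) = t - ∑ b ∈ T, p b := by ring
        rw [e2, e3, e1] at h
        exact h
      have h1 : (t - p s) * setProb p (t - p s) T
          = (∑ a ∈ T, p a * A a) + k * ∑ a ∈ T, p a * C a := by
        rw [setProb_rec p hT (t - p s), Finset.mul_sum]
        rw [Finset.mul_sum, ← Finset.sum_add_distrib]
        refine Finset.sum_congr rfl fun a ha => ?_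
        rw [key a ha]
        field_simp
      have h2 : setProb p t (insert s T)
          = (p s / t) * setProb p (t - p s) T + ∑ a ∈ T, (p a / t) * A a := by
        rw [setProb_rec p (Finset.insert_nonempty s T) t, Finset.sum_insert hsT,
          Finset.erase_insert hsT]
        congr 1
        refine Finset.sum_congr rfl fun a ha => ?_
        rw [Finset.erase_insert_of_ne (ne_of_mem_of_not_mem ha hsT).symm]
      have h3 : setProb p t T = ∑ a ∈ T, (p a / t) * C a := setProb_rec p hT t
      rw [h2, h3]
      have e1 : ∑ a ∈ T, (p a / t) * A a = (∑ a ∈ T, p a * A a) / t := by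
        rw [Finset.sum_div]
        exact Finset.sum_congr rfl fun a _ => by ring
      have e3 : ∑ a ∈ T, (p a / t) * C a = (∑ a ∈ T, p a * C a) / t := by
        rw [Finset.sum_div]
        exact Finset.sum_congr rfl fun a _ => by ring
      rw [e1, e3]
      calc setProb p (t - p s) T
          = (p s / t) * setProb p (t - p s) T
            + ((t - p s) * setProb p (t - p s) T) / t := by
            field_simp
            ring
        _ = (p s / t) * setProb p (t - p s) T
            + ((∑ a ∈ T, p a * A a) + k * ∑ a ∈ T, p a * C a) / t := by rw [h1]
        _ = (p s / t) * setProb p (t - p s) T + (∑ a ∈ T, p a * A a) / t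
            + k * ((∑ a ∈ T, p a * C a) / t) := by ring

end Aux

theorem rao_blackwell_sum_and_sample [DecidableEq α] [Inhabited α] (D S : Finset α)
    (hS : S ⊆ D) (hSne : S.Nonempty) (p f : α → ℝ)
    (hp : ∀ x ∈ D, 0 < p x) (hsum : ∑ x ∈ D, p x = 1) :
    ((S.toList.permutations.map (fun B =>
        ordProb p 1 B * ((B.dropLast.map (fun b => p b * f b)).sum
          + (1 - (B.dropLast.map p).sum) * f B.reverse.headI))).sum) / setProb p 1 S
      = ∑ s ∈ S, p s * (setProb p (1 - p s) (S.erase s) / setProb p 1 S) * f s := by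
  have hpS : ∀ s ∈ S, 0 < p s := fun s hs => hp s (hS hs)
  have hSle : ∑ s ∈ S, p s ≤ 1 := by
    rw [← hsum]
    exact Finset.sum_le_sum_of_subset_of_nonneg hS fun x hx _ => (hp x hx).le
  -- the value of the estimator simplifies on each permutation
  have hg : ∀ B ∈ Perms S,
      (B.dropLast.map (fun b => p b * f b)).sum
          + (1 - (B.dropLast.map p).sum) * f B.reverse.headI
        = (∑ s ∈ S, p s * f s) + (1 - ∑ s ∈ S, p s) * f B.reverse.headI := by
    intro B hB
    have hBne := Perms_ne_nil hSne hB
    have hsplit : B.dropLast ++ [B.getLast hBne] = B :=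
      List.dropLast_append_getLast hBne
    have hrev : B.reverse.headI = B.getLast hBne := by
      conv_lhs => rw [← hsplit]
      rw [List.reverse_append]
      rfl
    have hmap : ∀ h : α → ℝ, (B.dropLast.map h).sum = (∑ s ∈ S, h s) - h (B.getLast hBne) := by
      intro h
      have := map_sum_of_perm h hB
      conv_lhs at this => rw [← hsplit]
      rw [List.map_append, List.sum_append] at this
      simp only [List.map_cons, List.map_nil, List.sum_cons, List.sum_nil, add_zero] at this
      linarith
    rw [hrev, hmap (fun b => p b * f b), hmap p]
    ring
  have hnum : ∑ B ∈ Perms S, ordProb p 1 B *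
      ((B.dropLast.map (fun b => p b * f b)).sum
        + (1 - (B.dropLast.map p).sum) * f B.reverse.headI)
      = ∑ s ∈ S, p s * setProb p (1 - p s) (S.erase s) * f s := by
    have step1 : ∑ B ∈ Perms S, ordProb p 1 B *
        ((B.dropLast.map (fun b => p b * f b)).sum
          + (1 - (B.dropLast.map p).sum) * f B.reverse.headI)
        = (∑ s ∈ S, p s * f s) * setProb p 1 S
          + (1 - ∑ s ∈ S, p s) * ∑ B ∈ Perms S, ordProb p 1 B * f B.reverse.headI := by
      rw [setProb_eq, Finset.mul_sum, Finset.mul_sum, ← Finset.sum_add_distrib]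
      refine Finset.sum_congr rfl fun B hB => ?_
      rw [hg B hB]
      ring
    rw [step1, sum_Perms_last p f S 1 hSne]
    have step2 : ∀ s ∈ S, p s * setProb p (1 - p s) (S.erase s) * f s
        = p s * setProb p 1 S * f s
          + (1 - ∑ a ∈ S, p a) *
            ((p s / (1 - (∑ a ∈ S, p a) + p s)) * setProb p 1 (S.erase s) * f s) := by
      intro s hs
      have hsub : ∑ a ∈ S.erase s, p a = (∑ a ∈ S, p a) - p s :=
        Finset.sum_erase_eq_sub hs
      have h := setProb_insert_identity p (S.erase s) s 1 (Finset.notMem_erase s S)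
        (hpS s hs) (fun a ha => hpS a (Finset.mem_of_mem_erase ha))
        (by rw [hsub]; linarith)
      rw [hsub, Finset.insert_erase hs] at h
      have e2 : 1 - p s - ((∑ a ∈ S, p a) - p s) = 1 - ∑ a ∈ S, p a := by ring
      have e3 : 1 - ((∑ a ∈ S, p a) - p s) = 1 - (∑ a ∈ S, p a) + p s := by ring
      rw [e2, e3] at h
      rw [h]
      ring
    rw [Finset.sum_congr rfl step2, Finset.sum_add_distrib, Finset.mul_sum]
    congr 1
    rw [Finset.sum_mul]
    exact Finset.sum_congr rfl fun s _ => by ring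
  rw [← sum_Perms_eq, hnum]
  rw [Finset.sum_congr rfl (fun s _ => by
    rw [div_eq_mul_inv] : ∀ s ∈ S, p s * (setProb p (1 - p s) (S.erase s) / setProb p 1 S) * f s
      = p s * (setProb p (1 - p s) (S.erase s) * (setProb p 1 S)⁻¹) * f s)]
  rw [div_eq_mul_inv, Finset.sum_mul]
  exact Finset.sum_congr rfl fun s _ => by ring
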